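/- Let H be an infinite group which is not co-Hopfian (i.e., admits an injective but non-surjective endomorphism). Then for any finite group F, the lampshuffler Shuffler(H) = FSym(H) ⋊ H contains a subgroup isomorphic to the wreath product F ≀ H. -/

import Mathlib

open Pointwise

/-- The group of finitely supported permutations of a set `X`, as a subgroup of
the full permutation group. -/
def fsym (X : Type*) : Subgroup (Equiv.Perm X) where
  carrier := {σ : Equiv.Perm X | {x : X | σ x ≠ x}.Finite}
  one_mem' := by simp
  mul_mem' := by
    intro a b ha hb
    refine Set.Finite.subset (ha.union hb) ?_
    intro x hx
    simp only [Set.mem_setOf_eq, Equiv.Perm.mul_apply] at hx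
    by_contra hc
    simp only [Set.mem_union, Set.mem_setOf_eq, not_or, not_not] at hc
    rw [hc.2, hc.1] at hx
    exact hx rfl
  inv_mem' := by
    intro a ha
    refine Set.Finite.subset ha ?_
    intro x hx
    simp only [Set.mem_setOf_eq] at hx ⊢
    intro h
    apply hx
    conv_lhs => rw [← h]
    simp

theorem conj_mem_fsym {X : Type*} (c : Equiv.Perm X) {σ : Equiv.Perm X}
    (h : σ ∈ fsym X) : c * σ * c⁻¹ ∈ fsym X := by
  refine Set.Finite.subset (Set.Finite.image c h) ?_
  intro x hx
  simp only [Set.mem_setOf_eq, Equiv.Perm.mul_apply] at hx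
  refine ⟨c⁻¹ x, ?_, by simp⟩
  simp only [Set.mem_setOf_eq]
  intro hc
  apply hx
  rw [hc]
  simp

/-- The action of a group `H` on the permutations of `H`, by
`(h·σ)(x) = h σ(h⁻¹ x)`, i.e. conjugation by the left translation by `h`. -/
def permAct (H : Type*) [Group H] : H →* MulAut (Equiv.Perm H) :=
  MulAut.conj.comp (MulAction.toPermHom H H)

theorem permAct_apply {H : Type*} [Group H] (h : H) (σ : Equiv.Perm H) (x : H) :
    permAct H h σ x = h * σ (h⁻¹ * x) := rfl

theorem permAct_mem_fsym {H : Type*} [Group H] (h : H) {σ : Equiv.Perm H}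
    (hσ : σ ∈ fsym H) : permAct H h σ ∈ fsym H :=
  conj_mem_fsym _ hσ

/-- The "unrestricted" lampshuffler: the semidirect product of the full
permutation group of `H` with `H`. -/
abbrev BigShuffler (H : Type*) [Group H] := SemidirectProduct (Equiv.Perm H) H (permAct H)

/-- The lampshuffler group `Shuffler(H) = FSym(H) ⋊ H`, realised as the
subgroup of `BigShuffler H` whose permutation part is finitely supported. -/
def Shuffler (H : Type*) [Group H] : Subgroup (BigShuffler H) where
  carrier := {p | p.left ∈ fsym H}
  one_mem' := by
    simp only [Set.mem_setOf_eq, SemidirectProduct.one_left]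
    exact one_mem _
  mul_mem' := by
    intro a b ha hb
    simp only [Set.mem_setOf_eq, SemidirectProduct.mul_left] at *
    exact mul_mem ha (permAct_mem_fsym _ hb)
  inv_mem' := by
    intro a ha
    simp only [Set.mem_setOf_eq, SemidirectProduct.inv_left] at *
    exact permAct_mem_fsym _ (inv_mem ha)

/-- The restricted direct sum `⊕_K A`, as the subgroup of `K → A` of functions
with finite (multiplicative) support. -/
def finSuppFuns (K A : Type*) [Group A] : Subgroup (K → A) where
  carrier := {f | (Function.mulSupport f).Finite}
  one_mem' := by simp [Function.mulSupport_one]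
  mul_mem' := by
    intro a b ha hb
    exact Set.Finite.subset (ha.union hb) (Function.mulSupport_mul a b)
  inv_mem' := by
    intro a ha
    simpa [Function.mulSupport_inv] using ha

/-- The translation action of `K` on `K → A`: `(k·f)(x) = f(k⁻¹ x)`. -/
def wreathAct (A K : Type*) [Group A] [Group K] : K →* MulAut (K → A) where
  toFun k :=
    { toFun := fun f x => f (k⁻¹ * x)
      invFun := fun f x => f (k * x)
      left_inv := by intro f; funext x; simp [mul_assoc]
      right_inv := by intro f; funext x; simp [mul_assoc]
      map_mul' := by intro f g; rfl }
  map_one' := by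
    ext f x
    simp
  map_mul' := by
    intro k₁ k₂
    ext f x
    simp [mul_assoc]

/-- The "unrestricted" wreath product `(K → A) ⋊ K`. -/
abbrev BigWreath (A K : Type*) [Group A] [Group K] :=
  SemidirectProduct (K → A) K (wreathAct A K)

theorem wreathAct_mem_finSuppFuns {A K : Type*} [Group A] [Group K] (k : K)
    {f : K → A} (hf : f ∈ finSuppFuns K A) : wreathAct A K k f ∈ finSuppFuns K A := by
  refine Set.Finite.subset (Set.Finite.image (fun x => k * x) hf) ?_
  intro x hx
  exact ⟨k⁻¹ * x, hx, by simp⟩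

/-- The (restricted) wreath product `A ≀ K = (⊕_K A) ⋊ K`, realised as the
subgroup of `BigWreath A K` whose function part has finite support. -/
def Wreath (A K : Type*) [Group A] [Group K] : Subgroup (BigWreath A K) where
  carrier := {p | p.left ∈ finSuppFuns K A}
  one_mem' := by
    simp only [Set.mem_setOf_eq, SemidirectProduct.one_left]
    exact one_mem _
  mul_mem' := by
    intro a b ha hb
    simp only [Set.mem_setOf_eq, SemidirectProduct.mul_left] at *
    exact mul_mem ha (wreathAct_mem_finSuppFuns _ hb)
  inv_mem' := by
    intro a ha
    simp only [Set.mem_setOf_eq, SemidirectProduct.inv_left] at *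
    exact wreathAct_mem_finSuppFuns _ (inv_mem ha)


open Function

section Aux

variable {H F : Type*} [Group H] [Group F]

/-- Iterating an injective non-surjective endomorphism gives an injective endomorphism
whose range has at least `2^n` right cosets, witnessed by `x`. -/
theorem exists_deep_endo (ψ : H →* H) (hi : Function.Injective ψ)
    (hs : ¬ Function.Surjective ψ) (n : ℕ) :
    ∃ θ : H →* H, Function.Injective θ ∧ ∃ x : (Fin n → Bool) → H,
      ∀ ε δ, x ε * (x δ)⁻¹ ∈ θ.range → ε = δ := by
  induction n with
  | zero =>
      exact ⟨MonoidHom.id H, fun _ _ h => h, fun _ => 1,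
        fun ε δ _ => funext fun i => i.elim0⟩
  | succ n ih =>
      obtain ⟨θ, hθ, x, hx⟩ := ih
      have ht : ∃ t : H, t ∉ ψ.range := by
        by_contra hc
        push_neg at hc
        exact hs fun y => (hc y)
      obtain ⟨t, ht⟩ := ht
      refine ⟨ψ.comp θ, hi.comp hθ,
        fun ε => ψ (x (fun i => ε i.succ)) * (if ε 0 then t else 1), ?_⟩
      intro ε δ hmem
      set a := x (fun i => ε i.succ) with ha
      set b := x (fun i => δ i.succ) with hb
      -- first, ε 0 = δ 0
      have hrange : (ψ a * (if ε 0 then t else 1)) * (ψ b * (if δ 0 then t else 1))⁻¹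
          ∈ ψ.range := by
        obtain ⟨c, hc⟩ := hmem
        exact ⟨θ c, hc⟩
      have h0 : ε 0 = δ 0 := by
        by_contra h0
        have hTT : (if ε 0 then t else 1) * (if δ 0 then t else 1)⁻¹ ∈ ψ.range := by
          have : (if ε 0 then t else 1) * (if δ 0 then t else 1)⁻¹
              = (ψ a)⁻¹ * ((ψ a * (if ε 0 then t else 1)) * (ψ b * (if δ 0 then t else 1))⁻¹)
                * ψ b := by
            group
          rw [this]
          exact mul_mem (mul_mem (inv_mem ⟨a, rfl⟩) hrange) ⟨b, rfl⟩
        rcases Bool.eq_false_or_eq_true (ε 0) with hε | hε <;>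
          rcases Bool.eq_false_or_eq_true (δ 0) with hδ | hδ <;>
            simp [hε, hδ] at h0 hTT ⊢
        · exact ht hTT
        · exact ht hTT
      -- then the tails are equal
      have htail : (fun i : Fin n => ε i.succ) = fun i : Fin n => δ i.succ := by
        apply hx
        have hsame : (if ε 0 then t else 1) = (if δ 0 then t else 1) := by rw [h0]
        have : ψ a * (ψ b)⁻¹ ∈ (ψ.comp θ).range := by
          have heq : ψ a * (ψ b)⁻¹
              = (ψ a * (if ε 0 then t else 1)) * (ψ b * (if δ 0 then t else 1))⁻¹ := by
            rw [hsame]; group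
          rw [heq]; exact hmem
        obtain ⟨c, hc⟩ := this
        have : ψ (θ c) = ψ (a * b⁻¹) := by
          simpa [mul_inv_rev] using hc
        exact ⟨c, by rw [← hi this]⟩
      funext i
      refine Fin.cases ?_ ?_ i
      · exact h0
      · exact fun j => congrFun htail j

variable (θ : H →* H) (ι : F → H)

/-- The embedding `H × F → H`, `(h, a) ↦ θ(h) ι(a)`. -/
def embFn : H × F → H := fun p => θ p.1 * ι p.2

theorem embFn_injective (hθ : Function.Injective θ)
    (hι : ∀ a b : F, ι a * (ι b)⁻¹ ∈ θ.range → a = b) :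
    Function.Injective (embFn θ ι) := by
  rintro ⟨h, a⟩ ⟨h', b⟩ he
  simp only [embFn] at he
  have key : ι a * (ι b)⁻¹ = (θ h)⁻¹ * θ h' := by
    have := congrArg (fun z => (θ h)⁻¹ * z * (ι b)⁻¹) he
    simpa [mul_assoc] using this
  have hab : a = b := by
    refine hι a b ⟨h⁻¹ * h', ?_⟩
    rw [map_mul, map_inv, ← key]
  subst hab
  have : θ h = θ h' := mul_right_cancel he
  exact Prod.ext (hθ this) rfl

/-- The permutation of `H × F` given by `(h, a) ↦ (h, f(h) a)`. -/
def shear (f : H → F) : Equiv.Perm (H × F) :=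
  Equiv.prodShear (Equiv.refl H) fun h => Equiv.mulLeft (f h)

theorem shear_apply (f : H → F) (p : H × F) : shear f p = (p.1, f p.1 * p.2) := rfl

theorem shear_mul (f g : H → F) : shear (f * g) = shear f * shear g := by
  ext p <;> simp [shear_apply, mul_assoc]

theorem shear_one : shear (1 : H → F) = 1 := by
  ext p <;> simp [shear_apply]

variable [DecidablePred fun x : H => x ∈ Set.range (embFn θ ι)]

/-- The finitely-supported-when-`f`-is permutation of `H` induced by `f : H → F`. -/
noncomputable def lampPerm (hinj : Function.Injective (embFn θ ι)) (f : H → F) :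
    Equiv.Perm H :=
  (shear f).extendDomain (Equiv.ofInjective _ hinj)

theorem lampPerm_apply_mem (hinj : Function.Injective (embFn θ ι)) (f : H → F) (p : H × F) :
    lampPerm θ ι hinj f (embFn θ ι p) = embFn θ ι (p.1, f p.1 * p.2) := by
  have := Equiv.Perm.extendDomain_apply_image (shear f) (Equiv.ofInjective _ hinj) p
  simpa [lampPerm, shear_apply] using this

theorem lampPerm_apply_not_mem (hinj : Function.Injective (embFn θ ι)) (f : H → F) {x : H}
    (hx : x ∉ Set.range (embFn θ ι)) : lampPerm θ ι hinj f x = x :=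
  Equiv.Perm.extendDomain_apply_not_subtype _ _ hx

/-- `lampPerm` as a homomorphism. -/
noncomputable def lampHom (hinj : Function.Injective (embFn θ ι)) :
    (H → F) →* Equiv.Perm H where
  toFun := lampPerm θ ι hinj
  map_one' := by simp only [lampPerm, shear_one, Equiv.Perm.extendDomain_one]
  map_mul' f g := by simp only [lampPerm, shear_mul, ← Equiv.Perm.extendDomain_mul]

theorem lampPerm_equivariant (hinj : Function.Injective (embFn θ ι)) (h₀ : H) (f : H → F) :
    permAct H (θ h₀) (lampPerm θ ι hinj f) = lampPerm θ ι hinj ((wreathAct F H h₀) f) := by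
  ext x
  rw [permAct_apply]
  by_cases hx : x ∈ Set.range (embFn θ ι)
  · obtain ⟨⟨h, a⟩, rfl⟩ := hx
    have h1 : (θ h₀)⁻¹ * embFn θ ι (h, a) = embFn θ ι (h₀⁻¹ * h, a) := by
      simp [embFn, mul_assoc]
    rw [h1, lampPerm_apply_mem, lampPerm_apply_mem]
    show θ h₀ * (θ (h₀⁻¹ * h) * ι (f (h₀⁻¹ * h) * a)) = θ h * ι (f (h₀⁻¹ * h) * a)
    rw [← mul_assoc, ← map_mul, mul_inv_cancel_left]
  · have hx' : (θ h₀)⁻¹ * x ∉ Set.range (embFn θ ι) := by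
      rintro ⟨⟨h, a⟩, he⟩
      refine hx ⟨(h₀ * h, a), ?_⟩
      have he' : θ h * ι a = (θ h₀)⁻¹ * x := he
      show θ (h₀ * h) * ι a = x
      rw [map_mul, mul_assoc, he', mul_inv_cancel_left]
    rw [lampPerm_apply_not_mem θ ι hinj f hx', lampPerm_apply_not_mem θ ι hinj _ hx,
      mul_inv_cancel_left]

theorem lampPerm_mem_fsym [Finite F] (hinj : Function.Injective (embFn θ ι)) {f : H → F}
    (hf : (Function.mulSupport f).Finite) : lampPerm θ ι hinj f ∈ fsym H := by
  refine Set.Finite.subset (Set.Finite.image (embFn θ ι) (hf.prod Set.finite_univ)) ?_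
  intro x hx
  simp only [Set.mem_setOf_eq] at hx
  by_cases hr : x ∈ Set.range (embFn θ ι)
  · obtain ⟨⟨h, a⟩, rfl⟩ := hr
    by_cases hs : h ∈ Function.mulSupport f
    · exact ⟨(h, a), ⟨hs, trivial⟩, rfl⟩
    · exfalso
      apply hx
      have hfh : f h = 1 := not_not.mp hs
      rw [lampPerm_apply_mem]
      show embFn θ ι (h, f h * a) = embFn θ ι (h, a)
      rw [hfh, one_mul]
  · exact absurd (lampPerm_apply_not_mem θ ι hinj f hr) hx

/-- The embedding of the unrestricted wreath product into the unrestricted lampshuffler. -/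
noncomputable def bigPhi (hinj : Function.Injective (embFn θ ι)) :
    BigWreath F H →* BigShuffler H :=
  SemidirectProduct.map (lampHom θ ι hinj) θ (fun g =>
    MonoidHom.ext fun f => (lampPerm_equivariant θ ι hinj g f).symm)

theorem bigPhi_injective (hinj : Function.Injective (embFn θ ι))
    (hθ : Function.Injective θ) : Function.Injective (bigPhi θ ι hinj) := by
  rw [injective_iff_map_eq_one]
  intro p hp
  have h2 : θ p.right = 1 := by
    have := congrArg SemidirectProduct.right hp
    simpa [bigPhi] using this
  have h1 : lampPerm θ ι hinj p.left = 1 := by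
    have := congrArg SemidirectProduct.left hp
    exact (by simpa [bigPhi] using this : lampHom θ ι hinj p.left = 1)
  have hr : p.right = 1 := hθ (by rw [h2, map_one])
  have hl : p.left = 1 := by
    funext h
    have e1 : lampPerm θ ι hinj p.left (embFn θ ι (h, 1)) = embFn θ ι (h, 1) := by
      rw [h1]; rfl
    rw [lampPerm_apply_mem] at e1
    have e2 := hinj e1
    have e3 : p.left h * 1 = 1 := congrArg Prod.snd e2
    simpa using e3
  ext
  · rw [hl]; rfl
  · rw [hr]; rfl

end Aux

/-- Let `H` be an infinite group which is not co-Hopfian (it admits an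
injective non-surjective endomorphism). Then, for any finite group `F`, the
lampshuffler `Shuffler(H) = FSym(H) ⋊ H` contains a subgroup isomorphic to the
wreath product `F ≀ H`, i.e. `F ≀ H` embeds into `Shuffler(H)`. -/
theorem stmt_5 (H : Type*) [Group H] [Infinite H]
    (hH : ∃ ψ : H →* H, Function.Injective ψ ∧ ¬ Function.Surjective ψ)
    (F : Type*) [Group F] [Finite F] :
    ∃ Φ : ↥(Wreath F H) →* ↥(Shuffler H), Function.Injective Φ := by
  classical
  obtain ⟨ψ, hψi, hψs⟩ := hH
  obtain ⟨n, ⟨eF⟩⟩ := Finite.exists_equiv_fin F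
  obtain ⟨θ, hθ, x, hx⟩ := exists_deep_endo ψ hψi hψs n
  set g : F → (Fin n → Bool) := fun a j => decide (j = eF a) with hg
  have hg_inj : Function.Injective g := by
    intro a b hab
    have h1 := congrFun hab (eF a)
    simp only [hg, decide_eq_decide] at h1
    exact eF.injective (h1.mp trivial)
  set ι : F → H := fun a => x (g a) with hι_def
  have hι : ∀ a b : F, ι a * (ι b)⁻¹ ∈ θ.range → a = b :=
    fun a b hm => hg_inj (hx _ _ hm)
  have hinj := embFn_injective θ ι hθ hι
  refine ⟨((bigPhi θ ι hinj).comp (Wreath F H).subtype).codRestrict (Shuffler H) ?_, ?_⟩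
  · rintro ⟨p, hp⟩
    show (bigPhi θ ι hinj p).left ∈ fsym H
    rw [bigPhi, SemidirectProduct.map_left]
    exact lampPerm_mem_fsym θ ι hinj hp
  · intro a b hab
    apply Subtype.ext
    apply bigPhi_injective θ ι hinj hθ
    exact Subtype.ext_iff.mp hab
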